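/- The cyclic Burrows–Wheeler Transform of S_σ has exactly σ² + 2 runs. -/

import Mathlib

open List

/-- Block for symbol `a`: pairs (a,0)(a,1)⋯(a,σ-1) followed by a repeat of (a,σ-1). -/
def block (σ a : ℕ) : List ℕ :=
  ((List.range σ).flatMap fun b => [a, b]) ++ [a, σ - 1]

/-- The string S_σ: blocks for a = 0,…,σ-2 followed by the pair (σ-1,σ-1). -/
def Sstr (σ : ℕ) : List ℕ :=
  ((List.range (σ - 1)).flatMap fun a => block σ a) ++ [σ - 1, σ - 1]

/-- Rotation of `S` by offset `i`. -/
def rot (S : List ℕ) (i : ℕ) : List ℕ := S.drop i ++ S.take i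

/-- Cyclic k-gram of `S` starting at position `i` (indices mod `S.length`). -/
def cyc (S : List ℕ) (i k : ℕ) : List ℕ :=
  (List.range k).map fun j => S.getD ((i + j) % S.length) 0

/-- Number of cyclic occurrences of `u` in `S`. -/
def cOcc (S u : List ℕ) : ℕ :=
  ((List.range S.length).filter fun i => cyc S i u.length = u).length

/-- `u` occurs as a cyclic substring of `S`. -/
def cOccurs (S u : List ℕ) : Prop := 0 < cOcc S u

/-- Number of runs (maximal blocks of equal symbols) of a list. -/
def runsCount (l : List ℕ) : ℕ := (l.destutter (· ≠ ·)).length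

/-- Cyclic Burrows–Wheeler transform: sort all rotations lexicographically,
read the last column. -/
def cBWT (S : List ℕ) : List ℕ :=
  (((List.range S.length).map fun i => rot S i).insertionSort (· ≤ ·)).map
    fun ρ => ρ.getD (S.length - 1) 0

/-- Terminated string `t$`: symbols shifted by +1 and sentinel `0 = $` appended,
so the sentinel is strictly smaller than all alphabet symbols. -/
def term (t : List ℕ) : List ℕ := (t.map (· + 1)) ++ [0]

/-- BWT of the terminated string `t$`: last column of the sorted rotation matrix. -/
def bwt (t : List ℕ) : List ℕ :=
  (((List.range (term t).length).map fun i => rot (term t) i).insertionSort (· ≤ ·)).map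
    fun ρ => ρ.getD ((term t).length - 1) 0

/-- `x` is right-maximal in `w`: two distinct right extensions of `x` occur in `w`. -/
def RightMaximal (w x : List ℕ) : Prop :=
  ∃ a b : ℕ, a ≠ b ∧ (x ++ [a]) <:+: w ∧ (x ++ [b]) <:+: w

/-- The set of right-extensions of `w`. -/
def ExtSet (w : List ℕ) : Set (List ℕ) :=
  {y | ∃ x a, RightMaximal w x ∧ y = x ++ [a] ∧ y <:+: w}

/-- Super-maximal right-extensions: right-extensions that are not a proper suffix
of another right-extension. -/
def SuperMax (w : List ℕ) : Set (List ℕ) :=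
  {y ∈ ExtSet w | ∀ z ∈ ExtSet w, y <:+ z → y = z}

/-- χ: size of a smallest suffixient set = number of super-maximal right-extensions. -/
noncomputable def chi (w : List ℕ) : ℕ := (SuperMax w).ncard

/-- The regular cBWT block: each of 0,…,σ-1 twice in increasing order. -/
def patBlock (σ : ℕ) : List ℕ := (List.range σ).flatMap fun c => [c, c]

/-- The final irregular cBWT block: each of 0,…,σ-3 twice, then σ-2, σ-1, σ-2. -/
def patFinal (σ : ℕ) : List ℕ :=
  ((List.range (σ - 2)).flatMap fun c => [c, c]) ++ [σ - 2, σ - 1, σ - 2]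

/-- The canonical cBWT pattern: (σ-1) · (regular block)^m · final block. -/
def pattern (σ m : ℕ) : List ℕ :=
  [σ - 1] ++ (List.replicate m (patBlock σ)).flatten ++ patFinal σ

/-- `S` is 2-branching at order `k` over alphabet {0,…,σ-1}: every (k-1)-gram
occurs and its set of k-gram extensions is {u[0], (u[0]+1) mod σ}. -/
def TwoBranching (σ k : ℕ) (S : List ℕ) : Prop :=
  ∀ u : List ℕ, u.length = k - 1 → (∀ x ∈ u, x < σ) →
    cOccurs S u ∧ ∀ c, c < σ →
      (cOccurs S (u ++ [c]) ↔ c = u.headD 0 ∨ c = (u.headD 0 + 1) % σ)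

namespace St7

/-- flatMap over a range with constant-length blocks. -/
lemma length_flatMap_const {α : Type} (g : ℕ → List α) (L m : ℕ)
    (h : ∀ i < m, (g i).length = L) : ((range m).flatMap g).length = m * L := by
  induction m with
  | zero => simp
  | succ m ih =>
    rw [range_succ, flatMap_append, length_append,
      ih (fun i hi => h i (by omega))]
    simp [h m (by omega), Nat.succ_mul]

lemma length_block (σ a : ℕ) : (block σ a).length = 2*σ+2 := by
  rw [block, length_append, length_flatMap_const (fun b => [a,b]) 2 σ (by simp)]
  simp; ring

lemma length_Sstr (s : ℕ) : (Sstr (s+2)).length = 2*(s+2)^2 := by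
  rw [Sstr, length_append,
    length_flatMap_const _ (2*(s+2)+2) _ (fun i _ => length_block (s+2) i)]
  show (s+2-1) * (2*(s+2)+2) + 2 = 2*(s+2)^2
  have : s+2-1 = s+1 := rfl
  rw [this]; ring

lemma flatMap_range_decomp {α : Type} (g : ℕ → List α) {a m : ℕ} (h : a < m) :
    ∃ l₂, (range m).flatMap g = (range a).flatMap g ++ (g a ++ l₂) := by
  obtain ⟨k, rfl⟩ : ∃ k, m = (a+1)+k := ⟨m-(a+1), by omega⟩
  rw [range_add, flatMap_append, range_succ, flatMap_append]
  exact ⟨(map (fun x => a + 1 + x) (range k)).flatMap g, by simp [append_assoc]⟩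

/-- getD of a block at position 2j+e. -/
lemma block_getD (σ a j e : ℕ) (hj : j ≤ σ) (he : e ≤ 1) :
    (block σ a).getD (2*j+e) 0 = if e = 0 then a else min j (σ-1) := by
  rcases Nat.lt_or_ge j σ with hjσ | hjσ
  · obtain ⟨l₂, hdec⟩ := flatMap_range_decomp (fun b => [a,b]) hjσ
    rw [block, hdec, append_assoc, getD_append_right _ _ _ _
        (by rw [length_flatMap_const (fun b => [a,b]) 2 j (by simp)]; omega),
      length_flatMap_const (fun b => [a,b]) 2 j (by simp)]
    have : 2*j+e - j*2 = e := by omega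
    rw [this]
    interval_cases e <;> simp <;> omega
  · rw [show j = σ from by omega]
    rw [block, getD_append_right _ _ _ _
        (by rw [length_flatMap_const (fun b => [a,b]) 2 σ (by simp)]; omega),
      length_flatMap_const (fun b => [a,b]) 2 σ (by simp)]
    have : 2*σ+e - σ*2 = e := by omega
    rw [this]
    interval_cases e <;> simp

/-- getD of Sstr at even/odd positions inside block a. -/
lemma Sstr_getD (s a j e : ℕ) (ha : a ≤ s) (hj : j ≤ s+2) (he : e ≤ 1) :
    (Sstr (s+2)).getD (2*(a*(s+3)+j)+e) 0 = if e = 0 then a else min j (s+1) := by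
  have ha' : a < s+2-1 := by omega
  obtain ⟨l₂, hdec⟩ := flatMap_range_decomp (fun a => block (s+2) a) ha'
  have hlen : ((range a).flatMap fun a => block (s+2) a).length = a * (2*(s+2)+2) :=
    length_flatMap_const _ _ _ (fun i _ => length_block (s+2) i)
  rw [Sstr, hdec, append_assoc, append_assoc,
    getD_append_right _ _ _ _ (by rw [hlen]; nlinarith),
    hlen]
  have hpos : 2*(a*(s+3)+j)+e - a * (2*(s+2)+2) = 2*j+e := by
    have : a * (2*(s+2)+2) = 2*(a*(s+3)) := by ring
    omega
  rw [hpos, getD_append _ _ _ _ (by rw [length_block]; omega)]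
  have := block_getD (s+2) a j e hj he
  simpa using this

lemma Sstr_getD_even (s a j : ℕ) (ha : a ≤ s) (hj : j ≤ s+2) :
    (Sstr (s+2)).getD (2*(a*(s+3)+j)) 0 = a := by
  have := Sstr_getD s a j 0 ha hj (by omega)
  simpa using this

lemma Sstr_getD_odd (s a j : ℕ) (ha : a ≤ s) (hj : j ≤ s+2) :
    (Sstr (s+2)).getD (2*(a*(s+3)+j)+1) 0 = min j (s+1) := by
  have := Sstr_getD s a j 1 ha hj (by omega)
  simpa using this

lemma Sstr_getD_last (s e : ℕ) (he : e ≤ 1) :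
    (Sstr (s+2)).getD (2*(s+2)^2-2+e) 0 = s+1 := by
  have hlen : ((range (s+1)).flatMap fun a => block (s+2) a).length = (s+1) * (2*(s+2)+2) :=
    length_flatMap_const _ _ _ (fun i _ => length_block (s+2) i)
  have h2 : 2*(s+2)^2 = (s+1)*(2*(s+2)+2)+2 := by ring
  have hS : Sstr (s+2) = ((range (s+1)).flatMap fun a => block (s+2) a) ++ [s+1, s+1] := rfl
  rw [hS, getD_append_right _ _ _ _ (by rw [hlen]; omega), hlen]
  have : 2*(s+2)^2-2+e - (s+1)*(2*(s+2)+2) = e := by omega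
  rw [this]
  interval_cases e <;> simp

lemma rot_length (S : List ℕ) (i : ℕ) (h : i ≤ S.length) : (rot S i).length = S.length := by
  simp [rot]; omega

lemma rot_getD (S : List ℕ) (i t : ℕ) (hi : i < S.length) (ht : t < S.length) :
    (rot S i).getD t 0 = S.getD ((i+t) % S.length) 0 := by
  rw [rot, getD_eq_getElem?_getD, getD_eq_getElem?_getD, getElem?_append]
  rcases Nat.lt_or_ge (i+t) S.length with h | h
  · rw [Nat.mod_eq_of_lt h]
    rw [if_pos (by rw [length_drop]; omega), getElem?_drop]
  · have hmod : (i+t) % S.length = i+t-S.length := by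
      rw [Nat.mod_eq_sub_mod h, Nat.mod_eq_of_lt (by omega)]
    rw [hmod, if_neg (by rw [length_drop]; omega), length_drop, getElem?_take,
      if_pos (by omega)]
    rw [show t - (S.length - i) = i + t - S.length from by omega]

lemma lex_of_getD : ∀ (k : ℕ) (u v : List ℕ), k < u.length → k < v.length →
    (∀ j, j < k → u.getD j 0 = v.getD j 0) → u.getD k 0 < v.getD k 0 →
    List.Lex (· < ·) u v := by
  intro k
  induction k with
  | zero =>
    intro u v hu hv _ hlt
    match u, v with
    | x::u, y::v => exact List.Lex.rel (by simpa using hlt)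
  | succ k ih =>
    intro u v hu hv heq hlt
    match u, v with
    | x::u, y::v =>
      have h0 : x = y := by simpa using heq 0 (by omega)
      subst h0
      exact List.Lex.cons (ih u v (by simpa using hu) (by simpa using hv)
        (fun j hj => by simpa using heq (j+1) (by omega)) (by simpa using hlt))

lemma rot_lt {S : List ℕ} {i₁ i₂ : ℕ} (k : ℕ) (h₁ : i₁ < S.length) (h₂ : i₂ < S.length)
    (hk : k < S.length)
    (heq : ∀ j, j < k → S.getD ((i₁+j) % S.length) 0 = S.getD ((i₂+j) % S.length) 0)
    (hlt : S.getD ((i₁+k) % S.length) 0 < S.getD ((i₂+k) % S.length) 0) :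
    rot S i₁ < rot S i₂ := by
  show List.Lex (· < ·) _ _
  apply lex_of_getD k _ _ (by rw [rot_length S i₁ (by omega)]; omega)
    (by rw [rot_length S i₂ (by omega)]; omega)
  · intro j hj
    rw [rot_getD S i₁ j h₁ (by omega), rot_getD S i₂ j h₂ (by omega)]
    exact heq j hj
  · rw [rot_getD S i₁ k h₁ hk, rot_getD S i₂ k h₂ hk]
    exact hlt

lemma char_at {S : List ℕ} {i j P v : ℕ} (hiP : i + j = P) (hP : P < S.length)
    (hv : S.getD P 0 = v) : S.getD ((i+j) % S.length) 0 = v := by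
  rw [hiP, Nat.mod_eq_of_lt hP, hv]

lemma N_big (s : ℕ) : 8 ≤ 2*(s+2)^2 := by
  have : (s+2)^2 = s*s+4*s+4 := by ring
  omega

lemma ep4 (s c j : ℕ) (hc : c ≤ s) (hj : j ≤ s+2) : 2*(c*(s+3)+j)+4 ≤ 2*(s+2)^2 := by
  have h1 : c*(s+3) ≤ s*(s+3) := Nat.mul_le_mul_right _ hc
  have h2 : 2*(s*(s+3)+(s+2))+4 = 2*(s+2)^2 := by ring
  omega

lemma chr {s : ℕ} (i j P v : ℕ) (hiP : i + j = P) (hP : P < 2*(s+2)^2)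
    (hv : (Sstr (s+2)).getD P 0 = v) :
    (Sstr (s+2)).getD ((i+j) % (Sstr (s+2)).length) 0 = v := by
  rw [length_Sstr, hiP, Nat.mod_eq_of_lt hP, hv]

lemma chr_wrap {s : ℕ} (i j q v : ℕ) (hiq : i + j = 2*(s+2)^2 + q) (hq : q < 2*(s+2)^2)
    (hv : (Sstr (s+2)).getD q 0 = v) :
    (Sstr (s+2)).getD ((i+j) % (Sstr (s+2)).length) 0 = v := by
  rw [length_Sstr, hiq, Nat.add_mod_left, Nat.mod_eq_of_lt hq, hv]

lemma odd_val (s a j v : ℕ) (ha : a ≤ s) (hj : j ≤ s+2) (hv : min j (s+1) = v) :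
    (Sstr (s+2)).getD (2*(a*(s+3)+j)+1) 0 = v := (Sstr_getD_odd s a j ha hj).trans hv

lemma getD_zero (s : ℕ) : (Sstr (s+2)).getD 0 0 = 0 := by
  have h := Sstr_getD_even s 0 0 (Nat.zero_le s) (by omega); simpa using h

lemma getD_one (s : ℕ) : (Sstr (s+2)).getD 1 0 = 0 := by
  have h := Sstr_getD_odd s 0 0 (Nat.zero_le s) (by omega); simpa using h

lemma C1 (s c a : ℕ) (hc : c ≤ s) (ha : a ≤ s) :
    rot (Sstr (s+2)) (2*(c*(s+3)+a)) < rot (Sstr (s+2)) (2*(a*(s+3)+c)+1) := by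
  have hb1 := ep4 s c a hc (by omega)
  have hb2 := ep4 s a c ha (by omega)
  have hb3 := ep4 s c (a+1) hc (by omega)
  have hb4 := ep4 s a (c+1) ha (by omega)
  apply rot_lt 2 (by rw [length_Sstr]; omega) (by rw [length_Sstr]; omega)
    (by rw [length_Sstr]; have := N_big s; omega)
  · intro j hj
    interval_cases j
    · rw [chr _ 0 (2*(c*(s+3)+a)) c (by omega) (by omega)
          (Sstr_getD_even s c a hc (by omega)),
        chr _ 0 (2*(a*(s+3)+c)+1) c (by omega) (by omega)
          (odd_val s a c c ha (by omega) (by omega))]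
    · rw [chr _ 1 (2*(c*(s+3)+a)+1) a (by omega) (by omega)
          (odd_val s c a a hc (by omega) (by omega)),
        chr _ 1 (2*(a*(s+3)+(c+1))) a (by omega) (by omega)
          (Sstr_getD_even s a (c+1) ha (by omega))]
  · rw [chr _ 2 (2*(c*(s+3)+(a+1))) c (by omega) (by omega)
        (Sstr_getD_even s c (a+1) hc (by omega)),
      chr _ 2 (2*(a*(s+3)+(c+1))+1) (c+1) (by omega) (by omega)
        (odd_val s a (c+1) (c+1) ha (by omega) (by omega))]
    omega

lemma C2 (s c a : ℕ) (hc : c ≤ s) (ha : a+1 ≤ s) :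
    rot (Sstr (s+2)) (2*(a*(s+3)+c)+1) < rot (Sstr (s+2)) (2*(c*(s+3)+(a+1))) := by
  have hb1 := ep4 s a (c+1) (by omega) (by omega)
  have hb2 := ep4 s c (a+1) hc (by omega)
  have hN8 := N_big s
  apply rot_lt 1 (by rw [length_Sstr]; omega) (by rw [length_Sstr]; omega)
    (by rw [length_Sstr]; omega)
  · intro j hj
    interval_cases j
    rw [chr _ 0 (2*(a*(s+3)+c)+1) c (by omega) (by omega)
        (odd_val s a c c (by omega) (by omega) (by omega)),
      chr _ 0 (2*(c*(s+3)+(a+1))) c (by omega) (by omega)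
        (Sstr_getD_even s c (a+1) hc (by omega))]
  · rw [chr _ 1 (2*(a*(s+3)+(c+1))) a (by omega) (by omega)
        (Sstr_getD_even s a (c+1) (by omega) (by omega)),
      chr _ 1 (2*(c*(s+3)+(a+1))+1) (a+1) (by omega) (by omega)
        (odd_val s c (a+1) (a+1) hc (by omega) (by omega))]
    omega

lemma C3 (s c : ℕ) (hc : c ≤ s) :
    rot (Sstr (s+2)) (2*(s*(s+3)+c)+1) < rot (Sstr (s+2)) (2*(c*(s+3)+(s+1))) := by
  have hb1 := ep4 s s (c+1) (le_refl s) (by omega)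
  have hb2 := ep4 s c (s+1) hc (by omega)
  have hN8 := N_big s
  apply rot_lt 1 (by rw [length_Sstr]; omega) (by rw [length_Sstr]; omega)
    (by rw [length_Sstr]; omega)
  · intro j hj
    interval_cases j
    rw [chr _ 0 (2*(s*(s+3)+c)+1) c (by omega) (by omega)
        (odd_val s s c c (le_refl s) (by omega) (by omega)),
      chr _ 0 (2*(c*(s+3)+(s+1))) c (by omega) (by omega)
        (Sstr_getD_even s c (s+1) hc (by omega))]
  · rw [chr _ 1 (2*(s*(s+3)+(c+1))) s (by omega) (by omega)
        (Sstr_getD_even s s (c+1) (le_refl s) (by omega)),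
      chr _ 1 (2*(c*(s+3)+(s+1))+1) (s+1) (by omega) (by omega)
        (odd_val s c (s+1) (s+1) hc (by omega) (by omega))]
    omega

lemma C4 (s c : ℕ) (hc : c ≤ s) :
    rot (Sstr (s+2)) (2*(c*(s+3)+(s+1))) < rot (Sstr (s+2)) (2*(c*(s+3)+(s+2))) := by
  have hb1 := ep4 s c (s+1) hc (by omega)
  have hb2 := ep4 s c (s+2) hc (by omega)
  have hN8 := N_big s
  apply rot_lt 2 (by rw [length_Sstr]; omega) (by rw [length_Sstr]; omega)
    (by rw [length_Sstr]; omega)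
  · intro j hj
    interval_cases j
    · rw [chr _ 0 (2*(c*(s+3)+(s+1))) c (by omega) (by omega)
          (Sstr_getD_even s c (s+1) hc (by omega)),
        chr _ 0 (2*(c*(s+3)+(s+2))) c (by omega) (by omega)
          (Sstr_getD_even s c (s+2) hc (by omega))]
    · rw [chr _ 1 (2*(c*(s+3)+(s+1))+1) (s+1) (by omega) (by omega)
          (odd_val s c (s+1) (s+1) hc (by omega) (by omega)),
        chr _ 1 (2*(c*(s+3)+(s+2))+1) (s+1) (by omega) (by omega)
          (odd_val s c (s+2) (s+1) hc (by omega) (by omega))]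
  · rw [chr _ 2 (2*(c*(s+3)+(s+2))) c (by omega) (by omega)
        (Sstr_getD_even s c (s+2) hc (by omega))]
    rcases Nat.lt_or_ge c s with h | h
    · have hr : (c+1)*(s+3) = c*(s+3)+(s+3) := by ring
      have hb3 := ep4 s (c+1) 0 (by omega) (by omega)
      rw [chr _ 2 (2*((c+1)*(s+3)+0)) (c+1) (by omega) (by omega)
          (Sstr_getD_even s (c+1) 0 (by omega) (by omega))]
      omega
    · have hcs : c = s := by omega
      subst hcs
      have hN : 2*(c*(c+3)+(c+2))+4 = 2*(c+2)^2 := by ring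
      rw [chr _ 2 (2*(c+2)^2-2+0) (c+1) (by omega) (by omega)
          ((Sstr_getD_last c 0 (by omega)).trans (by omega))]
      omega

lemma C5 (s c : ℕ) (hc : c+1 ≤ s) :
    rot (Sstr (s+2)) (2*(c*(s+3)+(s+2))) < rot (Sstr (s+2)) (2*((c+1)*(s+3)+0)) := by
  have hb1 := ep4 s c (s+2) (by omega) (by omega)
  have hb2 := ep4 s (c+1) 0 (by omega) (by omega)
  have hN8 := N_big s
  apply rot_lt 0 (by rw [length_Sstr]; omega) (by rw [length_Sstr]; omega)
    (by rw [length_Sstr]; omega)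
  · intro j hj; omega
  · rw [chr _ 0 (2*(c*(s+3)+(s+2))) c (by omega) (by omega)
        (Sstr_getD_even s c (s+2) (by omega) (by omega)),
      chr _ 0 (2*((c+1)*(s+3)+0)) (c+1) (by omega) (by omega)
        (Sstr_getD_even s (c+1) 0 (by omega) (by omega))]
    omega

lemma C6 (s : ℕ) :
    rot (Sstr (s+2)) (2*(s*(s+3)+(s+2))) < rot (Sstr (s+2)) (2*(s+2)^2-1) := by
  have hb1 := ep4 s s (s+2) (le_refl s) (by omega)
  have hN8 := N_big s
  apply rot_lt 0 (by rw [length_Sstr]; omega) (by rw [length_Sstr]; omega)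
    (by rw [length_Sstr]; omega)
  · intro j hj; omega
  · rw [chr _ 0 (2*(s*(s+3)+(s+2))) s (by omega) (by omega)
        (Sstr_getD_even s s (s+2) (le_refl s) (by omega)),
      chr _ 0 (2*(s+2)^2-2+1) (s+1) (by omega) (by omega)
        (Sstr_getD_last s 1 (by omega))]
    omega

lemma C7 (s : ℕ) :
    rot (Sstr (s+2)) (2*(s+2)^2-1) < rot (Sstr (s+2)) (2*(0*(s+3)+(s+1))+1) := by
  have hb1 := ep4 s 0 (s+1) (by omega) (by omega)
  have hb2 := ep4 s 0 (s+2) (by omega) (by omega)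
  have hN8 := N_big s
  apply rot_lt 2 (by rw [length_Sstr]; omega) (by rw [length_Sstr]; omega)
    (by rw [length_Sstr]; omega)
  · intro j hj
    interval_cases j
    · rw [chr _ 0 (2*(s+2)^2-2+1) (s+1) (by omega) (by omega)
          (Sstr_getD_last s 1 (by omega)),
        chr _ 0 (2*(0*(s+3)+(s+1))+1) (s+1) (by omega) (by omega)
          (odd_val s 0 (s+1) (s+1) (by omega) (by omega) (by omega))]
    · rw [chr_wrap _ 1 0 0 (by omega) (by omega) (getD_zero s),
        chr _ 1 (2*(0*(s+3)+(s+2))) 0 (by omega) (by omega)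
          (Sstr_getD_even s 0 (s+2) (by omega) (by omega))]
  · rw [chr_wrap _ 2 1 0 (by omega) (by omega) (getD_one s),
      chr _ 2 (2*(0*(s+3)+(s+2))+1) (s+1) (by omega) (by omega)
        (odd_val s 0 (s+2) (s+1) (by omega) (by omega) (by omega))]
    omega

lemma C8 (s a : ℕ) (ha : a ≤ s) :
    rot (Sstr (s+2)) (2*(a*(s+3)+(s+1))+1) < rot (Sstr (s+2)) (2*(a*(s+3)+(s+2))+1) := by
  have hb1 := ep4 s a (s+1) ha (by omega)
  have hb2 := ep4 s a (s+2) ha (by omega)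
  have hN8 := N_big s
  apply rot_lt 1 (by rw [length_Sstr]; omega) (by rw [length_Sstr]; omega)
    (by rw [length_Sstr]; omega)
  · intro j hj
    interval_cases j
    rw [chr _ 0 (2*(a*(s+3)+(s+1))+1) (s+1) (by omega) (by omega)
        (odd_val s a (s+1) (s+1) ha (by omega) (by omega)),
      chr _ 0 (2*(a*(s+3)+(s+2))+1) (s+1) (by omega) (by omega)
        (odd_val s a (s+2) (s+1) ha (by omega) (by omega))]
  · rw [chr _ 1 (2*(a*(s+3)+(s+2))) a (by omega) (by omega)
        (Sstr_getD_even s a (s+2) ha (by omega))]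
    rcases Nat.lt_or_ge a s with h | h
    · have hr : (a+1)*(s+3) = a*(s+3)+(s+3) := by ring
      have hb3 := ep4 s (a+1) 0 (by omega) (by omega)
      rw [chr _ 1 (2*((a+1)*(s+3)+0)) (a+1) (by omega) (by omega)
          (Sstr_getD_even s (a+1) 0 (by omega) (by omega))]
      omega
    · have has : a = s := by omega
      subst has
      have hN : 2*(a*(a+3)+(a+2))+4 = 2*(a+2)^2 := by ring
      rw [chr _ 1 (2*(a+2)^2-2+0) (a+1) (by omega) (by omega)
          ((Sstr_getD_last a 0 (by omega)).trans (by omega))]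
      omega

lemma C9 (s a : ℕ) (ha : a+1 ≤ s) :
    rot (Sstr (s+2)) (2*(a*(s+3)+(s+2))+1) < rot (Sstr (s+2)) (2*((a+1)*(s+3)+(s+1))+1) := by
  have hr : (a+1)*(s+3) = a*(s+3)+(s+3) := by ring
  have hb1 := ep4 s a (s+2) (by omega) (by omega)
  have hb2 := ep4 s (a+1) (s+1) (by omega) (by omega)
  have hb3 := ep4 s (a+1) (s+2) (by omega) (by omega)
  have hb4 := ep4 s (a+1) 0 (by omega) (by omega)
  have hN8 := N_big s
  apply rot_lt 2 (by rw [length_Sstr]; omega) (by rw [length_Sstr]; omega)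
    (by rw [length_Sstr]; omega)
  · intro j hj
    interval_cases j
    · rw [chr _ 0 (2*(a*(s+3)+(s+2))+1) (s+1) (by omega) (by omega)
          (odd_val s a (s+2) (s+1) (by omega) (by omega) (by omega)),
        chr _ 0 (2*((a+1)*(s+3)+(s+1))+1) (s+1) (by omega) (by omega)
          (odd_val s (a+1) (s+1) (s+1) (by omega) (by omega) (by omega))]
    · rw [chr _ 1 (2*((a+1)*(s+3)+0)) (a+1) (by omega) (by omega)
          (Sstr_getD_even s (a+1) 0 (by omega) (by omega)),
        chr _ 1 (2*((a+1)*(s+3)+(s+2))) (a+1) (by omega) (by omega)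
          (Sstr_getD_even s (a+1) (s+2) (by omega) (by omega))]
  · rw [chr _ 2 (2*((a+1)*(s+3)+0)+1) 0 (by omega) (by omega)
        (odd_val s (a+1) 0 0 (by omega) (by omega) (by omega)),
      chr _ 2 (2*((a+1)*(s+3)+(s+2))+1) (s+1) (by omega) (by omega)
        (odd_val s (a+1) (s+2) (s+1) (by omega) (by omega) (by omega))]
    omega

lemma C10 (s : ℕ) :
    rot (Sstr (s+2)) (2*(s*(s+3)+(s+1))+1) < rot (Sstr (s+2)) (2*(s+2)^2-2) := by
  have hb1 := ep4 s s (s+1) (le_refl s) (by omega)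
  have hb2 := ep4 s s (s+2) (le_refl s) (by omega)
  have hN8 := N_big s
  apply rot_lt 1 (by rw [length_Sstr]; omega) (by rw [length_Sstr]; omega)
    (by rw [length_Sstr]; omega)
  · intro j hj
    interval_cases j
    rw [chr _ 0 (2*(s*(s+3)+(s+1))+1) (s+1) (by omega) (by omega)
        (odd_val s s (s+1) (s+1) (le_refl s) (by omega) (by omega)),
      chr _ 0 (2*(s+2)^2-2+0) (s+1) (by omega) (by omega)
        (Sstr_getD_last s 0 (by omega))]
  · rw [chr _ 1 (2*(s*(s+3)+(s+2))) s (by omega) (by omega)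
        (Sstr_getD_even s s (s+2) (le_refl s) (by omega)),
      chr _ 1 (2*(s+2)^2-2+1) (s+1) (by omega) (by omega)
        (Sstr_getD_last s 1 (by omega))]
    omega

lemma C11 (s : ℕ) :
    rot (Sstr (s+2)) (2*(s+2)^2-2) < rot (Sstr (s+2)) (2*(s*(s+3)+(s+2))+1) := by
  have hb1 := ep4 s s (s+2) (le_refl s) (by omega)
  have hN : 2*(s*(s+3)+(s+2))+4 = 2*(s+2)^2 := by ring
  have hN8 := N_big s
  apply rot_lt 2 (by rw [length_Sstr]; omega) (by rw [length_Sstr]; omega)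
    (by rw [length_Sstr]; omega)
  · intro j hj
    interval_cases j
    · rw [chr _ 0 (2*(s+2)^2-2+0) (s+1) (by omega) (by omega)
          (Sstr_getD_last s 0 (by omega)),
        chr _ 0 (2*(s*(s+3)+(s+2))+1) (s+1) (by omega) (by omega)
          (odd_val s s (s+2) (s+1) (le_refl s) (by omega) (by omega))]
    · rw [chr _ 1 (2*(s+2)^2-2+1) (s+1) (by omega) (by omega)
          (Sstr_getD_last s 1 (by omega)),
        chr _ 1 (2*(s+2)^2-2+0) (s+1) (by omega) (by omega)
          (Sstr_getD_last s 0 (by omega))]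
  · rw [chr_wrap _ 2 0 0 (by omega) (by omega) (getD_zero s),
      chr _ 2 (2*(s+2)^2-2+1) (s+1) (by omega) (by omega)
        (Sstr_getD_last s 1 (by omega))]
    omega

def gIdx (s c : ℕ) : List ℕ :=
  ((range (s+1)).flatMap fun a => [2*(c*(s+3)+a), 2*(a*(s+3)+c)+1])
  ++ [2*(c*(s+3)+(s+1)), 2*(c*(s+3)+(s+2))]

def tIdx (s : ℕ) : List ℕ :=
  (2*(s+2)^2-1) :: (((range s).flatMap fun a => [2*(a*(s+3)+(s+1))+1, 2*(a*(s+3)+(s+2))+1])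
  ++ [2*(s*(s+3)+(s+1))+1, 2*(s+2)^2-2, 2*(s*(s+3)+(s+2))+1])

def sIdx (s : ℕ) : List ℕ := ((range (s+1)).flatMap (gIdx s)) ++ tIdx s

lemma pairs_getLast? {α : Type} (f g : ℕ → α) (m : ℕ) (hm : 1 ≤ m) :
    ((range m).flatMap fun a => [f a, g a]).getLast? = some (g (m-1)) := by
  obtain ⟨k, rfl⟩ : ∃ k, m = k+1 := ⟨m-1, by omega⟩
  rw [range_succ, flatMap_append]
  simp [getLast?_append]

lemma pairs_head? {α : Type} (f g : ℕ → α) (m : ℕ) (hm : 1 ≤ m) :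
    ((range m).flatMap fun a => [f a, g a]).head? = some (f 0) := by
  obtain ⟨k, rfl⟩ : ∃ k, m = k+1 := ⟨m-1, by omega⟩
  rw [range_succ_eq_map, flatMap_cons]
  simp

lemma chain'_pairs {α : Type} (R : α → α → Prop) (f g : ℕ → α) (m : ℕ)
    (h1 : ∀ a, a < m → R (f a) (g a)) (h2 : ∀ a, a+1 < m → R (g a) (f (a+1))) :
    IsChain R ((range m).flatMap fun a => [f a, g a]) := by
  induction m with
  | zero => simp
  | succ m ih =>
    rw [range_succ, flatMap_append, isChain_append]
    refine ⟨ih (fun a ha => h1 a (by omega)) (fun a ha => h2 a (by omega)), ?_, ?_⟩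
    · simpa [isChain_pair] using h1 m (by omega)
    · intro x hx y hy
      rcases Nat.eq_zero_or_pos m with rfl | hm
      · simp at hx
      · rw [pairs_getLast? f g m hm] at hx
        simp at hx hy
        subst hx; subst hy
        have := h2 (m-1) (by omega)
        rwa [show m-1+1 = m from by omega] at this

lemma blocks_getLast? {α : Type} (g : ℕ → List α) (m : ℕ) (hm : 1 ≤ m)
    (hne : g (m-1) ≠ []) :
    ((range m).flatMap g).getLast? = (g (m-1)).getLast? := by
  obtain ⟨k, rfl⟩ : ∃ k, m = k+1 := ⟨m-1, by omega⟩
  simp only [Nat.add_sub_cancel] at hne ⊢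
  cases hgl : (g k).getLast? with
  | none => exact absurd (getLast?_eq_none_iff.mp hgl) hne
  | some y =>
    rw [range_succ, flatMap_append, getLast?_append]
    simp [hgl]

lemma chain'_blocks {α : Type} (R : α → α → Prop) (g : ℕ → List α) (m : ℕ)
    (hne : ∀ c, c < m → g c ≠ [])
    (hc : ∀ c, c < m → IsChain R (g c))
    (hb : ∀ c, c+1 < m → ∀ x ∈ (g c).getLast?, ∀ y ∈ (g (c+1)).head?, R x y) :
    IsChain R ((range m).flatMap g) := by
  induction m with
  | zero => simp
  | succ m ih =>
    rw [range_succ, flatMap_append, isChain_append]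
    refine ⟨ih (fun c h => hne c (by omega)) (fun c h => hc c (by omega))
      (fun c h => hb c (by omega)), by simpa using hc m (by omega), ?_⟩
    intro x hx y hy
    rcases Nat.eq_zero_or_pos m with rfl | hm
    · simp at hx
    · rw [blocks_getLast? g m hm (hne (m-1) (by omega))] at hx
      simp at hy
      have := hb (m-1) (by omega) x hx y (by rw [show m-1+1 = m from by omega]; simpa using hy)
      exact this

lemma chain_gIdx (s c : ℕ) (hc : c ≤ s) :
    IsChain (fun i j => rot (Sstr (s+2)) i < rot (Sstr (s+2)) j) (gIdx s c) := by
  rw [gIdx, isChain_append]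
  refine ⟨chain'_pairs _ _ _ _ (fun a ha => C1 s c a hc (by omega))
    (fun a ha => C2 s c a hc (by omega)),
    by simpa [isChain_pair] using C4 s c hc, ?_⟩
  intro x hx y hy
  rw [pairs_getLast? _ _ _ (by omega)] at hx
  simp at hx hy
  subst hx; subst hy
  exact C3 s c hc

lemma gIdx_ne (s c : ℕ) : gIdx s c ≠ [] := by simp [gIdx]

lemma gIdx_head? (s c : ℕ) : (gIdx s c).head? = some (2*(c*(s+3)+0)) := by
  rw [gIdx, head?_append, pairs_head? _ _ _ (by omega)]; rfl

lemma gIdx_getLast? (s c : ℕ) : (gIdx s c).getLast? = some (2*(c*(s+3)+(s+2))) := by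
  simp [gIdx, getLast?_append]

lemma chain_tIdx (s : ℕ) :
    IsChain (fun i j => rot (Sstr (s+2)) i < rot (Sstr (s+2)) j) (tIdx s) := by
  rw [tIdx, isChain_cons]
  constructor
  · intro y hy
    rcases Nat.eq_zero_or_pos s with rfl | hs
    · simp at hy; subst hy; simpa using C7 0
    · rw [head?_append, pairs_head? _ _ _ hs] at hy
      simp at hy; subst hy; simpa using C7 s
  · rw [isChain_append]
    refine ⟨chain'_pairs _ _ _ _ (fun a ha => C8 s a (by omega))
      (fun a ha => C9 s a (by omega)), ?_, ?_⟩
    · rw [isChain_cons_cons, isChain_cons_cons]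
      refine ⟨C10 s, C11 s, ?_⟩; simp
    · intro x hx y hy
      rcases Nat.eq_zero_or_pos s with rfl | hs
      · simp at hx
      · rw [pairs_getLast? _ _ _ hs] at hx
        simp at hx hy
        subst hx; subst hy
        have := C9 s (s-1) (by omega)
        rwa [show s-1+1 = s from by omega] at this

lemma chain_sIdx (s : ℕ) :
    IsChain (fun i j => rot (Sstr (s+2)) i < rot (Sstr (s+2)) j) (sIdx s) := by
  rw [sIdx, isChain_append]
  refine ⟨chain'_blocks _ _ _ (fun c hc => gIdx_ne s c)
    (fun c hc => chain_gIdx s c (by omega)) ?_, chain_tIdx s, ?_⟩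
  · intro c hc x hx y hy
    rw [gIdx_getLast?] at hx; rw [gIdx_head?] at hy
    simp at hx hy; subst hx; subst hy
    exact C5 s c (by omega)
  · intro x hx y hy
    rw [blocks_getLast? _ _ (by omega) (gIdx_ne s (s+1-1)), gIdx_getLast?] at hx
    simp [tIdx] at hx hy; subst hx; subst hy
    exact C6 s

lemma pairwise_sIdx (s : ℕ) :
    Pairwise (fun i j => rot (Sstr (s+2)) i < rot (Sstr (s+2)) j) (sIdx s) := by
  haveI : IsTrans ℕ (fun i j => rot (Sstr (s+2)) i < rot (Sstr (s+2)) j) :=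
    ⟨fun a b c h1 h2 => lt_trans h1 h2⟩
  exact isChain_iff_pairwise.mp (chain_sIdx s)

lemma length_gIdx (s c : ℕ) : (gIdx s c).length = 2*s+4 := by
  rw [gIdx, length_append, length_flatMap_const _ 2 _ (by simp)]
  simp; omega

lemma length_tIdx (s : ℕ) : (tIdx s).length = 2*s+4 := by
  rw [tIdx, length_cons, length_append, length_flatMap_const _ 2 _ (by simp)]
  simp; omega

lemma length_sIdx (s : ℕ) : (sIdx s).length = 2*(s+2)^2 := by
  rw [sIdx, length_append, length_flatMap_const _ (2*s+4) _ (fun i _ => length_gIdx s i),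
    length_tIdx]
  have : (s+1)*(2*s+4)+(2*s+4) = 2*(s+2)^2 := by ring
  omega

lemma mem_sIdx (s i : ℕ) (hi : i ∈ sIdx s) : i < 2*(s+2)^2 := by
  have hN8 := N_big s
  rcases mem_append.mp hi with h | h
  · obtain ⟨c, hc, h⟩ := mem_flatMap.mp h; rw [mem_range] at hc
    rw [gIdx] at h
    rcases mem_append.mp h with h | h
    · obtain ⟨a, ha, h⟩ := mem_flatMap.mp h; rw [mem_range] at ha
      have hb1 := ep4 s c a (by omega) (by omega)
      have hb2 := ep4 s a c (by omega) (by omega)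
      simp at h; rcases h with rfl | rfl <;> omega
    · have hb1 := ep4 s c (s+1) (by omega) (by omega)
      have hb2 := ep4 s c (s+2) (by omega) (by omega)
      simp at h; rcases h with rfl | rfl <;> omega
  · rw [tIdx] at h
    rcases mem_cons.mp h with rfl | h
    · omega
    rcases mem_append.mp h with h | h
    · obtain ⟨a, ha, h⟩ := mem_flatMap.mp h; rw [mem_range] at ha
      have hb1 := ep4 s a (s+1) (by omega) (by omega)
      have hb2 := ep4 s a (s+2) (by omega) (by omega)
      simp at h; rcases h with rfl | rfl <;> omega
    · have hb1 := ep4 s s (s+1) (le_refl s) (by omega)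
      have hb2 := ep4 s s (s+2) (le_refl s) (by omega)
      simp at h; rcases h with rfl | rfl | rfl <;> omega

lemma perm_sIdx (s : ℕ) :
    ((sIdx s).map (rot (Sstr (s+2)))) ~ ((range (2*(s+2)^2)).map (rot (Sstr (s+2)))) := by
  apply Subperm.perm_of_length_le
  · apply Nodup.subperm
    · exact pairwise_map.mpr ((pairwise_sIdx s).imp (fun h => ne_of_lt h))
    · intro x hx
      obtain ⟨i, hi, rfl⟩ := mem_map.mp hx
      exact mem_map.mpr ⟨i, mem_range.mpr (mem_sIdx s i hi), rfl⟩
  · simp [length_sIdx]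

lemma sorted_map_sIdx (s : ℕ) :
    Pairwise (· ≤ ·) ((sIdx s).map (rot (Sstr (s+2)))) :=
  pairwise_map.mpr ((pairwise_sIdx s).imp (fun h => le_of_lt h))

lemma insertionSort_eq (s : ℕ) :
    ((range (2*(s+2)^2)).map (rot (Sstr (s+2)))).insertionSort (· ≤ ·)
      = (sIdx s).map (rot (Sstr (s+2))) :=
  Perm.eq_of_pairwise' (pairwise_insertionSort _ _) (sorted_map_sIdx s)
    ((perm_insertionSort _ _).trans (perm_sIdx s).symm)

/-! last column values -/

lemma lastf (s i q v : ℕ) (hiq : i + (2*(s+2)^2-1) = 2*(s+2)^2 + q) (hi : i < 2*(s+2)^2)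
    (hq : q < 2*(s+2)^2) (hv : (Sstr (s+2)).getD q 0 = v) :
    (rot (Sstr (s+2)) i).getD (2*(s+2)^2-1) 0 = v := by
  rw [rot_getD _ _ _ (by rw [length_Sstr]; omega)
    (by rw [length_Sstr]; have := N_big s; omega)]
  exact chr_wrap _ _ q v hiq hq hv

lemma lastf0 (s : ℕ) : (rot (Sstr (s+2)) 0).getD (2*(s+2)^2-1) 0 = s+1 := by
  have hN8 := N_big s
  rw [rot_getD _ _ _ (by rw [length_Sstr]; omega) (by rw [length_Sstr]; omega)]
  rw [length_Sstr, show (0 + (2*(s+2)^2-1)) = 2*(s+2)^2-2+1 from by omega,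
    Nat.mod_eq_of_lt (by omega)]
  exact Sstr_getD_last s 1 (by omega)

lemma V1 (s c a : ℕ) (hc : c ≤ s) (ha : a ≤ s) :
    (rot (Sstr (s+2)) (2*(c*(s+3)+a))).getD (2*(s+2)^2-1) 0
      = if a = 0 then s+1 else a-1 := by
  have hN8 := N_big s
  rcases Nat.eq_zero_or_pos a with rfl | hap
  · simp only [if_pos rfl]
    rcases Nat.eq_zero_or_pos c with rfl | hcp
    · simpa using lastf0 s
    · obtain ⟨c', rfl⟩ : ∃ c', c = c'+1 := ⟨c-1, by omega⟩
      have hr : (c'+1)*(s+3) = c'*(s+3)+(s+3) := by ring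
      have hb := ep4 s c' (s+2) (by omega) (by omega)
      exact lastf s _ (2*(c'*(s+3)+(s+2))+1) (s+1) (by omega) (by omega) (by omega)
        (odd_val s c' (s+2) (s+1) (by omega) (by omega) (by omega))
  · obtain ⟨a', rfl⟩ : ∃ a', a = a'+1 := ⟨a-1, by omega⟩
    simp only [Nat.succ_ne_zero, if_neg, Nat.add_sub_cancel]
    have hb := ep4 s c (a'+1) hc (by omega)
    exact lastf s _ (2*(c*(s+3)+a')+1) a' (by omega) (by omega) (by omega)
      (odd_val s c a' a' hc (by omega) (by omega))

lemma V2 (s x j : ℕ) (hx : x ≤ s) (hj : j ≤ s+2) :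
    (rot (Sstr (s+2)) (2*(x*(s+3)+j)+1)).getD (2*(s+2)^2-1) 0 = x := by
  have hN8 := N_big s
  have hb := ep4 s x j hx hj
  exact lastf s _ (2*(x*(s+3)+j)) x (by omega) (by omega) (by omega)
    (Sstr_getD_even s x j hx hj)

lemma V3 (s c : ℕ) (hc : c ≤ s) :
    (rot (Sstr (s+2)) (2*(c*(s+3)+(s+1)))).getD (2*(s+2)^2-1) 0 = s := by
  have hN8 := N_big s
  have hb := ep4 s c (s+1) hc (by omega)
  exact lastf s _ (2*(c*(s+3)+s)+1) s (by omega) (by omega) (by omega)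
    (odd_val s c s s hc (by omega) (by omega))

lemma V4 (s c : ℕ) (hc : c ≤ s) :
    (rot (Sstr (s+2)) (2*(c*(s+3)+(s+2)))).getD (2*(s+2)^2-1) 0 = s+1 := by
  have hN8 := N_big s
  have hb := ep4 s c (s+2) hc (by omega)
  exact lastf s _ (2*(c*(s+3)+(s+1))+1) (s+1) (by omega) (by omega) (by omega)
    (odd_val s c (s+1) (s+1) hc (by omega) (by omega))

lemma V5 (s : ℕ) :
    (rot (Sstr (s+2)) (2*(s+2)^2-1)).getD (2*(s+2)^2-1) 0 = s+1 := by
  have hN8 := N_big s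
  exact lastf s _ (2*(s+2)^2-2+0) (s+1) (by omega) (by omega) (by omega)
    (Sstr_getD_last s 0 (by omega))

lemma V6 (s : ℕ) :
    (rot (Sstr (s+2)) (2*(s+2)^2-2)).getD (2*(s+2)^2-1) 0 = s+1 := by
  have hN8 := N_big s
  have hN : 2*(s*(s+3)+(s+2))+4 = 2*(s+2)^2 := by ring
  exact lastf s _ (2*(s*(s+3)+(s+2))+1) (s+1) (by omega) (by omega) (by omega)
    (odd_val s s (s+2) (s+1) (le_refl s) (by omega) (by omega))

lemma flatMap_congr' {α β : Type} {l : List α} {f g : α → List β}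
    (h : ∀ a ∈ l, f a = g a) : l.flatMap f = l.flatMap g := by
  induction l with
  | nil => rfl
  | cons x l ih =>
    rw [flatMap_cons, flatMap_cons, h x mem_cons_self,
      ih (fun a ha => h a (mem_cons_of_mem _ ha))]

lemma map_last_sIdx (s : ℕ) :
    (sIdx s).map (fun i => (rot (Sstr (s+2)) i).getD (2*(s+2)^2-1) 0) =
      ((range (s+1)).flatMap fun c =>
        ((range (s+1)).flatMap fun a => [if a = 0 then s+1 else a-1, a]) ++ [s, s+1])
      ++ ((s+1) :: (((range s).flatMap fun a => [a, a]) ++ [s, s+1, s])) := by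
  rw [sIdx, map_append, map_flatMap]
  congr 1
  · apply flatMap_congr'
    intro c hc; rw [mem_range] at hc
    rw [gIdx, map_append, map_flatMap]
    congr 1
    · apply flatMap_congr'
      intro a ha; rw [mem_range] at ha
      simp only [map_cons, map_nil]
      rw [V1 s c a (by omega) (by omega), V2 s a c (by omega) (by omega)]
    · simp only [map_cons, map_nil]
      rw [V3 s c (by omega), V4 s c (by omega)]
  · rw [tIdx, map_cons, map_append, map_flatMap, V5 s]
    congr 2
    · apply flatMap_congr'
      intro a ha; rw [mem_range] at ha
      simp only [map_cons, map_nil]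
      rw [V2 s a (s+1) (by omega) (by omega), V2 s a (s+2) (by omega) (by omega)]
    · simp only [map_cons, map_nil]
      rw [V2 s s (s+1) (le_refl s) (by omega), V6 s, V2 s s (s+2) (le_refl s) (by omega)]

/-! runs counting -/

def D (x : ℕ) (l : List ℕ) : ℕ := (destutter' (· ≠ ·) x l).length

lemma D_nil (x : ℕ) : D x [] = 1 := rfl

lemma D_cons_eq {x b : ℕ} (l : List ℕ) (h : x = b) : D x (b::l) = D x l := by
  rw [D, destutter'_cons, if_neg (by simp [h]), D]

lemma D_cons_ne {x b : ℕ} (l : List ℕ) (h : x ≠ b) : D x (b::l) = 1 + D b l := by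
  rw [D, destutter'_cons, if_pos (by simpa using h), length_cons, D, Nat.add_comm]

lemma runsCount_cons (a : ℕ) (l : List ℕ) : runsCount (a::l) = D a l := by
  rw [runsCount, destutter_cons', D]

lemma chunkD : ∀ (m : ℕ), 1 ≤ m → ∀ (x : ℕ) (r : List ℕ), x ≠ 0 →
    D x (((range m).flatMap fun a => [a,a]) ++ r) = m + D (m-1) r := by
  intro m
  induction m with
  | zero => omega
  | succ m ih =>
    intro _ x r hx
    rcases Nat.eq_zero_or_pos m with rfl | hm
    · rw [show ((range 1).flatMap fun a => ([a,a]:List ℕ)) ++ r = 0 :: 0 :: r from by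
        rw [show range 1 = [0] from rfl]; simp,
        D_cons_ne _ hx, D_cons_eq _ rfl]
    · rw [range_succ, flatMap_append, append_assoc, ih hm x _ hx,
        show ([m].flatMap fun a => [a,a]) ++ r = m :: m :: r from by simp,
        D_cons_ne _ (by omega), D_cons_eq _ rfl]
      simp; omega

lemma interleave_eq (z : ℕ) : ∀ k, ((range (k+1)).flatMap fun a => [if a = 0 then z else a-1, a])
    = z :: ((((range k).flatMap fun a => [a,a])) ++ [k]) := by
  intro k
  induction k with
  | zero => rw [show range 1 = [0] from rfl]; simp
  | succ k ih =>
    rw [range_succ, flatMap_append, ih]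
    conv_rhs => rw [range_succ, flatMap_append]
    simp [append_assoc]

lemma group_eq (s : ℕ) :
    (((range (s+1)).flatMap fun a => [if a = 0 then s+1 else a-1, a]) ++ [s, s+1])
      = (s+1) :: (((range (s+1)).flatMap fun a => [a,a]) ++ [s+1]) := by
  rw [interleave_eq (s+1) s]
  conv_rhs => rw [range_succ, flatMap_append]
  simp [append_assoc]

lemma GD (s : ℕ) (r : List ℕ) :
    D (s+1) (((s+1) :: (((range (s+1)).flatMap fun a => [a,a]) ++ [s+1])) ++ r)
      = (s+2) + D (s+1) r := by
  rw [cons_append, D_cons_eq _ rfl, append_assoc,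
    chunkD (s+1) (by omega) _ _ (by omega), singleton_append,
    D_cons_ne _ (by omega)]
  omega

lemma powG_front (s : ℕ) (G : List ℕ) : ∀ k,
    ((range (k+1)).flatMap fun _ => G) = G ++ ((range k).flatMap fun _ => G) := by
  intro k
  induction k with
  | zero => simp [show range 1 = [0] from rfl]
  | succ k ih =>
    conv_lhs => rw [range_succ, flatMap_append, ih]
    conv_rhs => rw [range_succ, flatMap_append]
    simp [append_assoc]

lemma repeatD (s : ℕ) : ∀ (k : ℕ) (r : List ℕ),
    D (s+1) (((range k).flatMap fun _ =>
        ((s+1) :: (((range (s+1)).flatMap fun a => [a,a]) ++ [s+1]))) ++ r)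
      = k*(s+2) + D (s+1) r := by
  intro k
  induction k with
  | zero => simp
  | succ k ih =>
    intro r
    rw [range_succ (n := k), flatMap_append, append_assoc, ih,
      show (([k].flatMap fun _ =>
        ((s+1) :: (((range (s+1)).flatMap fun a => [a,a]) ++ [s+1]))) ++ r)
        = ((s+1) :: (((range (s+1)).flatMap fun a => [a,a]) ++ [s+1])) ++ r from by simp,
      GD s r]
    ring

lemma DT (s : ℕ) :
    D (s+1) ((s+1) :: (((range s).flatMap fun a => [a, a]) ++ [s, s+1, s])) = s + 4 := by
  rw [D_cons_eq _ rfl]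
  rcases Nat.eq_zero_or_pos s with rfl | hs
  · rw [show (((range 0).flatMap fun a => ([a,a]:List ℕ)) ++ [0,1,0]) = 0 :: 1 :: 0 :: [] from rfl,
      D_cons_ne _ (by omega), D_cons_ne _ (by omega), D_cons_ne _ (by omega)]
    rfl
  · rw [show ([s, s+1, s] : List ℕ) = s :: (s+1) :: s :: [] from rfl,
      chunkD s hs _ _ (by omega), D_cons_ne _ (by omega), D_cons_ne _ (by omega),
      D_cons_ne _ (by omega)]
    rw [D_nil]

lemma cBWT_sstr (s : ℕ) :
    cBWT (Sstr (s+2)) =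
      ((range (s+1)).flatMap fun c =>
        ((range (s+1)).flatMap fun a => [if a = 0 then s+1 else a-1, a]) ++ [s, s+1])
      ++ ((s+1) :: (((range s).flatMap fun a => [a, a]) ++ [s, s+1, s])) := by
  rw [cBWT, length_Sstr, insertionSort_eq s, map_map]
  exact map_last_sIdx s

lemma runs_final (s : ℕ) : runsCount (cBWT (Sstr (s+2))) = (s+2)^2 + 2 := by
  rw [cBWT_sstr s]
  rw [flatMap_congr' (fun c _ => group_eq s)]
  rw [powG_front s _ s, cons_append, cons_append, runsCount_cons, append_assoc,
    append_assoc, chunkD (s+1) (by omega) _ _ (by omega), singleton_append,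
    D_cons_ne _ (by omega), repeatD s s, DT s]
  have : (s+2)^2 = s*s+4*s+4 := by ring
  have h2 : s*(s+2) = s*s+2*s := by ring
  omega

end St7

/-- the cyclic BWT of S_σ has exactly σ² + 2 runs. -/
theorem stmt7 (σ : ℕ) (hσ : 2 ≤ σ) :
    runsCount (cBWT (Sstr σ)) = σ ^ 2 + 2 := by
  obtain ⟨s, rfl⟩ : ∃ s, σ = s+2 := ⟨σ-2, by omega⟩
  exact St7.runs_final s
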